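/- Let δ > 0, M > 0, T ≥ 0, and let f : ℝ → [0, ∞) be Lebesgue measurable and left-constant, i.e. f(v) = f(0) for all v ≤ 0. Then ∫₀^T (e^{M·u}/δ)·(∫_{u−δ}^u f(v) dv) du ≤ ((e^{M·δ} − 1)/(M·δ))·(δ·f(0) + ∫₀^T e^{M·u}·f(u) du). In particular, if δ ≤ 1 the right-hand side is at most ((e^{Mδ} − 1)/(Mδ))·(f(0) + ∫₀^T e^{Mu}·f(u) du). -/

import Mathlib

open MeasureTheory ENNReal

theorem myexp (M a b : ℝ) (hM : 0 < M) :
    ∫ x in a..b, Real.exp (M*x) = (Real.exp (M*b) - Real.exp (M*a))/M := by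
  have := intervalIntegral.integral_comp_mul_left (a := a) (b := b) (fun x => Real.exp x) hM.ne'
  simp [integral_exp] at this
  rw [this]
  field_simp

theorem lint_exp (M a b : ℝ) (hM : 0 < M) (hab : a ≤ b) :
    ∫⁻ u in Set.Icc a b, ENNReal.ofReal (Real.exp (M*u)) =
      ENNReal.ofReal ((Real.exp (M*b) - Real.exp (M*a))/M) := by
  rw [← ofReal_integral_eq_lintegral_ofReal]
  · rw [MeasureTheory.integral_Icc_eq_integral_Ioc, ← intervalIntegral.integral_of_le hab,
      myexp M a b hM]
  · exact (Real.continuous_exp.comp (continuous_const.mul continuous_id)).integrableOn_Icc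
  · exact Filter.Eventually.of_forall fun x => (Real.exp_pos _).le

theorem main_bound (δ M T : ℝ) (hδ : 0 < δ) (hM : 0 < M) (hT : 0 ≤ T)
    (f : ℝ → ℝ≥0∞) (hf : Measurable f) :
    (∫⁻ u in Set.Icc (0 : ℝ) T,
        ENNReal.ofReal (Real.exp (M * u) / δ) * ∫⁻ v in Set.Icc (u - δ) u, f v) ≤
      ∫⁻ v in Set.Icc (-δ) T,
        ENNReal.ofReal ((Real.exp (M * δ) - 1) / (M * δ) * Real.exp (M * v)) * f v := by
  set c : ℝ := (Real.exp (M * δ) - 1) / (M * δ) with hc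
  set S : Set (ℝ × ℝ) := {q : ℝ × ℝ | q.1 - δ ≤ q.2 ∧ q.2 ≤ q.1} with hS
  have hSm : MeasurableSet S := by
    apply MeasurableSet.inter
    · exact measurableSet_le (by fun_prop) measurable_snd
    · exact measurableSet_le measurable_snd measurable_fst
  set F : ℝ × ℝ → ℝ≥0∞ := fun p =>
    ENNReal.ofReal (Real.exp (M * p.1) / δ) * S.indicator (fun q => f q.2) p with hF
  have hFm : Measurable F := by
    apply Measurable.mul
    · fun_prop
    · exact (hf.comp measurable_snd).indicator hSm
  have step1 : (∫⁻ u in Set.Icc (0 : ℝ) T,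
        ENNReal.ofReal (Real.exp (M * u) / δ) * ∫⁻ v in Set.Icc (u - δ) u, f v)
      = ∫⁻ u in Set.Icc (0 : ℝ) T, ∫⁻ v, F (u, v) := by
    refine lintegral_congr fun u => ?_
    rw [← lintegral_const_mul _ hf, ← lintegral_indicator measurableSet_Icc _]
    refine lintegral_congr fun v => ?_
    simp only [hF]
    by_cases h : v ∈ Set.Icc (u - δ) u
    · rw [Set.indicator_of_mem h, Set.indicator_of_mem (show (u,v) ∈ S from ⟨h.1, h.2⟩)]
    · rw [Set.indicator_of_notMem h,
        Set.indicator_of_notMem (show (u,v) ∉ S from fun hm => h ⟨hm.1, hm.2⟩), mul_zero]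
  have step2 : (∫⁻ u in Set.Icc (0 : ℝ) T, ∫⁻ v, F (u, v))
      = ∫⁻ v, ∫⁻ u in Set.Icc (0 : ℝ) T, F (u, v) := by
    exact lintegral_lintegral_swap (hFm.aemeasurable)
  rw [step1, step2]
  -- pointwise bound in v
  have key : ∀ v : ℝ, (∫⁻ u in Set.Icc (0 : ℝ) T, F (u, v)) ≤
      (Set.Icc (-δ) T).indicator
        (fun v => ENNReal.ofReal (c * Real.exp (M * v)) * f v) v := by
    intro v
    have hrw : ∀ u : ℝ, F (u, v) =
        (Set.Icc v (v + δ)).indicator (fun u => ENNReal.ofReal (Real.exp (M * u) / δ) * f v) u := by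
      intro u
      simp only [hF]
      by_cases h : (u, v) ∈ S
      · rw [Set.indicator_of_mem h, Set.indicator_of_mem]
        constructor <;> linarith [h.1, h.2]
      · rw [Set.indicator_of_notMem h, Set.indicator_of_notMem, mul_zero]
        intro hu
        exact h ⟨by linarith [hu.2], by linarith [hu.1]⟩
    simp only [hrw]
    rw [lintegral_indicator measurableSet_Icc _, Measure.restrict_restrict measurableSet_Icc]
    by_cases hv : v ∈ Set.Icc (-δ) T
    · rw [Set.indicator_of_mem hv]
      calc ∫⁻ u in Set.Icc v (v + δ) ∩ Set.Icc (0:ℝ) T,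
              ENNReal.ofReal (Real.exp (M * u) / δ) * f v
          ≤ ∫⁻ u in Set.Icc v (v + δ), ENNReal.ofReal (Real.exp (M * u) / δ) * f v :=
            lintegral_mono_set Set.inter_subset_left
        _ = (∫⁻ u in Set.Icc v (v + δ), ENNReal.ofReal (Real.exp (M * u) / δ)) * f v :=
            lintegral_mul_const _ (by fun_prop)
        _ = ENNReal.ofReal (c * Real.exp (M * v)) * f v := by
            congr 1
            have : ∀ u : ℝ, ENNReal.ofReal (Real.exp (M * u) / δ) =
                ENNReal.ofReal (Real.exp (M * u)) * ENNReal.ofReal δ⁻¹ := by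
              intro u
              rw [← ENNReal.ofReal_mul (Real.exp_pos _).le, div_eq_mul_inv]
            simp only [this]
            rw [lintegral_mul_const _ (by fun_prop),
              lint_exp M v (v + δ) hM (by linarith),
              ← ENNReal.ofReal_mul (div_nonneg (sub_nonneg.2 (Real.exp_le_exp.2
                (by nlinarith))) hM.le)]
            congr 1
            rw [mul_add, Real.exp_add, ← div_eq_mul_inv, div_div, div_mul_eq_mul_div,
              div_eq_div_iff (by positivity) (by positivity)]
            ring
    · rw [Set.indicator_of_notMem hv]
      have : Set.Icc v (v + δ) ∩ Set.Icc (0:ℝ) T = ∅ := by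
        rw [Set.eq_empty_iff_forall_notMem]
        rintro u ⟨⟨h1, h2⟩, h3, h4⟩
        simp only [Set.mem_Icc, not_and_or, not_le] at hv
        rcases hv with h | h <;> linarith
      rw [this]
      simp
  calc ∫⁻ v, ∫⁻ u in Set.Icc (0 : ℝ) T, F (u, v)
      ≤ ∫⁻ v, (Set.Icc (-δ) T).indicator
          (fun v => ENNReal.ofReal (c * Real.exp (M * v)) * f v) v := lintegral_mono key
    _ = ∫⁻ v in Set.Icc (-δ) T, ENNReal.ofReal (c * Real.exp (M * v)) * f v :=
        lintegral_indicator measurableSet_Icc _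

/-- For `δ > 0`, `M > 0`, `T ≥ 0` and a nonnegative measurable `f` with
`f v = f 0` for `v ≤ 0`,
`∫₀^T (e^{Mu}/δ) ∫_{u-δ}^u f(v) dv du
  ≤ ((e^{Mδ} - 1)/(Mδ)) (δ f(0) + ∫₀^T e^{Mu} f(u) du)`;
in particular, for `δ ≤ 1` the right-hand side is at most
`((e^{Mδ} - 1)/(Mδ)) (f(0) + ∫₀^T e^{Mu} f(u) du)`. -/
theorem window_average_exp_weight_bound (δ M T : ℝ) (hδ : 0 < δ) (hM : 0 < M) (hT : 0 ≤ T)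
    (f : ℝ → ℝ≥0∞) (hf : Measurable f) (hconst : ∀ v : ℝ, v ≤ 0 → f v = f 0) :
    ((∫⁻ u in Set.Icc (0 : ℝ) T,
        ENNReal.ofReal (Real.exp (M * u) / δ) * ∫⁻ v in Set.Icc (u - δ) u, f v) ≤
      ENNReal.ofReal ((Real.exp (M * δ) - 1) / (M * δ)) *
        (ENNReal.ofReal δ * f 0 +
          ∫⁻ u in Set.Icc (0 : ℝ) T, ENNReal.ofReal (Real.exp (M * u)) * f u)) ∧
    (δ ≤ 1 →
      (∫⁻ u in Set.Icc (0 : ℝ) T,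
          ENNReal.ofReal (Real.exp (M * u) / δ) * ∫⁻ v in Set.Icc (u - δ) u, f v) ≤
        ENNReal.ofReal ((Real.exp (M * δ) - 1) / (M * δ)) *
          (f 0 + ∫⁻ u in Set.Icc (0 : ℝ) T, ENNReal.ofReal (Real.exp (M * u)) * f u)) := by
  set c : ℝ := (Real.exp (M * δ) - 1) / (M * δ) with hc
  have hc0 : 0 ≤ c := div_nonneg (sub_nonneg.2 (Real.one_le_exp (by positivity))) (by positivity)
  have hsplit : Set.Icc (-δ) T = Set.Icc (-δ) 0 ∪ Set.Ioc (0:ℝ) T :=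
    (Set.Icc_union_Ioc_eq_Icc (by linarith) hT).symm
  have h1 : (∫⁻ v in Set.Icc (-δ) (0:ℝ), ENNReal.ofReal (c * Real.exp (M * v)) * f v)
      ≤ ENNReal.ofReal c * (ENNReal.ofReal δ * f 0) := by
    calc (∫⁻ v in Set.Icc (-δ) (0:ℝ), ENNReal.ofReal (c * Real.exp (M * v)) * f v)
        ≤ ∫⁻ _ in Set.Icc (-δ) (0:ℝ), ENNReal.ofReal c * f 0 := by
          refine setLIntegral_mono measurable_const fun v hv => ?_
          rw [hconst v hv.2]
          exact mul_le_mul_left (ENNReal.ofReal_le_ofReal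
            (by nlinarith [Real.exp_le_one_iff.2 (mul_nonpos_iff.2 (Or.inl ⟨hM.le, hv.2⟩) : M * v ≤ 0), Real.exp_pos (M*v)])) _
      _ = ENNReal.ofReal c * f 0 * volume (Set.Icc (-δ) (0:ℝ)) := setLIntegral_const _ _
      _ = ENNReal.ofReal c * (ENNReal.ofReal δ * f 0) := by
          rw [Real.volume_Icc]
          rw [show (0:ℝ) - (-δ) = δ by ring]
          ring
  have h2 : (∫⁻ v in Set.Ioc (0:ℝ) T, ENNReal.ofReal (c * Real.exp (M * v)) * f v)
      ≤ ENNReal.ofReal c * ∫⁻ u in Set.Icc (0:ℝ) T, ENNReal.ofReal (Real.exp (M * u)) * f u := by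
    calc (∫⁻ v in Set.Ioc (0:ℝ) T, ENNReal.ofReal (c * Real.exp (M * v)) * f v)
        ≤ ∫⁻ v in Set.Icc (0:ℝ) T, ENNReal.ofReal (c * Real.exp (M * v)) * f v :=
          lintegral_mono_set Set.Ioc_subset_Icc_self
      _ = ∫⁻ v in Set.Icc (0:ℝ) T,
            ENNReal.ofReal c * (ENNReal.ofReal (Real.exp (M * v)) * f v) := by
          refine lintegral_congr fun v => ?_
          rw [ENNReal.ofReal_mul hc0, mul_assoc]
      _ = ENNReal.ofReal c * ∫⁻ u in Set.Icc (0:ℝ) T, ENNReal.ofReal (Real.exp (M * u)) * f u :=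
          lintegral_const_mul _ (by fun_prop)
  have hmain : (∫⁻ u in Set.Icc (0 : ℝ) T,
        ENNReal.ofReal (Real.exp (M * u) / δ) * ∫⁻ v in Set.Icc (u - δ) u, f v) ≤
      ENNReal.ofReal c *
        (ENNReal.ofReal δ * f 0 +
          ∫⁻ u in Set.Icc (0 : ℝ) T, ENNReal.ofReal (Real.exp (M * u)) * f u) := by
    calc (∫⁻ u in Set.Icc (0 : ℝ) T,
          ENNReal.ofReal (Real.exp (M * u) / δ) * ∫⁻ v in Set.Icc (u - δ) u, f v)
        ≤ ∫⁻ v in Set.Icc (-δ) T, ENNReal.ofReal (c * Real.exp (M * v)) * f v :=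
          main_bound δ M T hδ hM hT f hf
      _ = (∫⁻ v in Set.Icc (-δ) (0:ℝ), ENNReal.ofReal (c * Real.exp (M * v)) * f v)
          + ∫⁻ v in Set.Ioc (0:ℝ) T, ENNReal.ofReal (c * Real.exp (M * v)) * f v := by
          rw [hsplit]
          exact lintegral_union measurableSet_Ioc ((Set.Iic_disjoint_Ioc le_rfl).mono Set.Icc_subset_Iic_self le_rfl)
      _ ≤ ENNReal.ofReal c * (ENNReal.ofReal δ * f 0)
          + ENNReal.ofReal c *
            ∫⁻ u in Set.Icc (0:ℝ) T, ENNReal.ofReal (Real.exp (M * u)) * f u := add_le_add h1 h2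
      _ = _ := (mul_add _ _ _).symm
  refine ⟨hmain, fun hδ1 => hmain.trans ?_⟩
  refine mul_le_mul_right (add_le_add_left ?_ _) _
  calc ENNReal.ofReal δ * f 0 ≤ 1 * f 0 :=
        mul_le_mul_left (ENNReal.ofReal_le_one.2 hδ1) _
    _ = f 0 := one_mul _
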